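/- Let b > 3/8 be a real number. There exists a constant C > 0 such that for every real number τ and every natural number m, Σ_{k=0}^{m} ⟨τ − k(k+1) − (m−k)(m−k+1)⟩^{1−4b} ≤ C. -/

import Mathlib

/-- The Japanese bracket `⟨x⟩ = (1 + |x|²)^{1/2}`. -/
noncomputable def jb (x : ℝ) : ℝ := Real.sqrt (1 + x ^ 2)

private lemma summable_aux {α : ℝ} (hα : α < -(1/2 : ℝ)) :
    Summable (fun i : ℤ => (1 + (i : ℝ) ^ 2) ^ α) := by
  have h1 : (1 : ℝ) < -(2 * α) := by linarith
  have hs : Summable (fun i : ℤ => |(i : ℝ)| ^ (2 * α)) := by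
    have := Real.summable_abs_int_rpow h1
    simpa using this
  have hind : Summable (fun i : ℤ => if i = 0 then (1 : ℝ) else 0) := by
    apply summable_of_ne_finset_zero (s := ({0} : Finset ℤ))
    intro i hi
    simp only [Finset.mem_singleton] at hi
    simp [hi]
  refine (hs.add hind).of_nonneg_of_le (fun i => by positivity) (fun i => ?_)
  rcases eq_or_ne i 0 with rfl | hi
  · simp [Real.zero_rpow (by linarith : 2 * α ≠ 0)]
  · have h2 : (1 : ℝ) ≤ (i : ℝ) ^ 2 := by
      have : (1 : ℤ) ≤ i ^ 2 := by rcases lt_or_gt_of_ne hi with h | h <;> nlinarith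
      exact_mod_cast this
    have h3 : (1 + (i : ℝ) ^ 2) ^ α ≤ ((i : ℝ) ^ 2) ^ α :=
      Real.rpow_le_rpow_of_nonpos (by linarith) (by linarith) (by linarith)
    have h4 : ((i : ℝ) ^ 2) ^ α = |(i : ℝ)| ^ (2 * α) := by
      rw [← sq_abs, ← Real.rpow_natCast |(i : ℝ)| 2, ← Real.rpow_mul (abs_nonneg _)]
      norm_num
    have h5 : (0 : ℝ) ≤ if i = 0 then (1 : ℝ) else 0 := by positivity
    calc (1 + (i : ℝ) ^ 2) ^ α ≤ |(i : ℝ)| ^ (2 * α) := h4 ▸ h3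
      _ ≤ _ := by linarith

private lemma sum_shift_bound {α : ℝ} (hα : α < -(1/2 : ℝ)) :
    ∃ T : ℝ, 0 ≤ T ∧ ∀ (d : ℝ) (s : Finset ℕ),
      ∑ k ∈ s, (1 + ((k : ℝ) - d) ^ 2) ^ α ≤ T := by
  have hsum := summable_aux hα
  refine ⟨(4 : ℝ) ^ (-α) * ∑' i : ℤ, (1 + (i : ℝ) ^ 2) ^ α, ?_, ?_⟩
  · have : (0:ℝ) ≤ ∑' i : ℤ, (1 + (i : ℝ) ^ 2) ^ α := tsum_nonneg (fun i : ℤ => by positivity :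
      ∀ i : ℤ, (0:ℝ) ≤ (1 + (i : ℝ) ^ 2) ^ α)
    positivity
  intro d s
  set n : ℤ := round d with hn
  have hnd : |d - n| ≤ 1/2 := by simpa [hn] using abs_sub_round d
  have hnd2 : (d - n) ^ 2 ≤ 1/4 := by nlinarith [abs_nonneg (d - (n:ℝ)), sq_abs (d - (n:ℝ))]
  have step1 : ∀ k : ℕ, (1 + ((k : ℝ) - d) ^ 2) ^ α ≤
      (4 : ℝ) ^ (-α) * (1 + ((((k : ℤ) - n : ℤ) : ℝ)) ^ 2) ^ α := by
    intro k
    set A : ℝ := 1 + ((((k : ℤ) - n : ℤ) : ℝ)) ^ 2 with hA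
    have hAc : (((k : ℤ) - n : ℤ) : ℝ) = (k : ℝ) - (n : ℝ) := by push_cast; ring
    have hA1 : (1 : ℝ) ≤ A := by rw [hA]; nlinarith [sq_nonneg ((((k : ℤ) - n : ℤ) : ℝ))]
    have hkey : A / 4 ≤ 1 + ((k : ℝ) - d) ^ 2 := by
      rw [hA, hAc]
      nlinarith [sq_nonneg (((k:ℝ) - d) - (d - (n:ℝ)))]
    have h1 : (1 + ((k : ℝ) - d) ^ 2) ^ α ≤ (A / 4) ^ α :=
      Real.rpow_le_rpow_of_nonpos (by linarith) hkey (by linarith)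
    have h2 : (A / 4) ^ α = (4 : ℝ) ^ (-α) * A ^ α := by
      rw [Real.div_rpow (by linarith) (by norm_num), Real.rpow_neg (by norm_num)]
      ring
    linarith [h1, h2.le, h2.ge]
  calc ∑ k ∈ s, (1 + ((k : ℝ) - d) ^ 2) ^ α
      ≤ ∑ k ∈ s, (4 : ℝ) ^ (-α) * (1 + ((((k : ℤ) - n : ℤ) : ℝ)) ^ 2) ^ α :=
        Finset.sum_le_sum (fun k _ => step1 k)
    _ = (4 : ℝ) ^ (-α) * ∑ k ∈ s, (1 + ((((k : ℤ) - n : ℤ) : ℝ)) ^ 2) ^ α := by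
        rw [Finset.mul_sum]
    _ ≤ (4 : ℝ) ^ (-α) * ∑' i : ℤ, (1 + (i : ℝ) ^ 2) ^ α := by
        have hinj : Set.InjOn (fun k : ℕ => (k : ℤ) - n) s := by
          intro a _ bb _ h; simpa using h
        have : ∑ k ∈ s, (1 + ((((k : ℤ) - n : ℤ) : ℝ)) ^ 2) ^ α
            = ∑ i ∈ s.image (fun k : ℕ => (k : ℤ) - n), (1 + (i : ℝ) ^ 2) ^ α := by
          rw [Finset.sum_image (fun a ha bb hb => hinj ha hb)]
        rw [this]
        have := Summable.sum_le_tsum (s.image (fun k : ℕ => (k : ℤ) - n))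
          (fun i _ => by positivity) hsum
        have h4 : (0:ℝ) ≤ (4 : ℝ) ^ (-α) := by positivity
        exact mul_le_mul_of_nonneg_left this h4

set_option maxHeartbeats 1000000 in
/-- The key counting estimate for the bilinear Strichartz estimate on `S²`: for `b > 3/8`
the sums `Σ_{k=0}^{m} ⟨τ − k(k+1) − (m−k)(m−k+1)⟩^{1−4b}` are bounded uniformly in
`τ ∈ ℝ` and `m ∈ ℕ`. -/
theorem sum_bracket_modulation_bound (b : ℝ) (hb : 3 / 8 < b) :
    ∃ C : ℝ, 0 < C ∧ ∀ (τ : ℝ) (m : ℕ),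
      ∑ k ∈ Finset.range (m + 1),
          jb (τ - (k : ℝ) * ((k : ℝ) + 1) - ((m - k : ℕ) : ℝ) * (((m - k : ℕ) : ℝ) + 1)) ^
            (1 - 4 * b) ≤ C := by
  set α : ℝ := 1 - 4 * b with hαdef
  clear_value α
  have hα : α < -(1/2 : ℝ) := by rw [hαdef]; linarith
  obtain ⟨T, hT0, hT⟩ := sum_shift_bound hα
  have hhalf : (0:ℝ) < (1/2 : ℝ) ^ (α/2) := by positivity
  refine ⟨(1/2 : ℝ) ^ (α/2) * (2 * T) + 1, by positivity, ?_⟩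
  intro τ m
  set σ : ℝ := τ - (m : ℝ) ^ 2 / 2 - m with hσdef
  set r : ℝ := Real.sqrt (max σ 0 / 2) with hrdef
  have hr0 : 0 ≤ r := Real.sqrt_nonneg _
  clear_value σ r
  have hpt : ∀ k ∈ Finset.range (m + 1),
      jb (τ - (k : ℝ) * ((k : ℝ) + 1) - ((m - k : ℕ) : ℝ) * (((m - k : ℕ) : ℝ) + 1)) ^ α ≤
      (1/2 : ℝ) ^ (α/2) * ((1 + ((k : ℝ) - ((m : ℝ)/2 + r)) ^ 2) ^ α
        + (1 + ((k : ℝ) - ((m : ℝ)/2 - r)) ^ 2) ^ α) := by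
    intro k hk
    have hkm : k ≤ m := Nat.lt_succ_iff.mp (Finset.mem_range.mp hk)
    have hcast : ((m - k : ℕ) : ℝ) = (m : ℝ) - k := by
      rw [Nat.cast_sub hkm]
    set x : ℝ := (k : ℝ) - (m : ℝ)/2 with hxdef
    set y : ℝ := σ - 2 * x ^ 2 with hydef
    have hy : τ - (k : ℝ) * ((k : ℝ) + 1) - ((m - k : ℕ) : ℝ) * (((m - k : ℕ) : ℝ) + 1) = y := by
      rw [hcast, hydef, hxdef, hσdef]; ring
    rw [hy]
    clear_value x y
    have hkey : 2 * (|x| - r) ^ 2 ≤ |y| := by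
      rcases le_or_gt σ 0 with hσ0 | hσ0
      · have hrz : r = 0 := by rw [hrdef, max_eq_right hσ0]; simp
        rw [hrz]
        nlinarith [neg_abs_le y, sq_abs x, sq_nonneg x]
      · have hr2 : r ^ 2 = σ / 2 := by
          rw [hrdef, max_eq_left hσ0.le]
          exact Real.sq_sqrt (by linarith)
        rcases le_total |x| r with h | h
        · nlinarith [le_abs_self y, sq_abs x, mul_nonneg (abs_nonneg x) (sub_nonneg.2 h),
            hydef.le, hydef.ge]
        · nlinarith [neg_abs_le y, sq_abs x, mul_nonneg hr0 (sub_nonneg.2 h),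
            hydef.le, hydef.ge]
    obtain ⟨u, hudef⟩ : ∃ u : ℝ, u = |x| - r := ⟨_, rfl⟩
    rw [← hudef] at hkey
    obtain ⟨A, hAdef⟩ : ∃ A : ℝ, A = 1 + u ^ 2 := ⟨_, rfl⟩
    have hA1 : (1 : ℝ) ≤ A := by nlinarith [sq_nonneg u, hAdef.le, hAdef.ge]
    have hsq : A ^ 2 / 2 ≤ 1 + y ^ 2 := by
      have habs : (0:ℝ) ≤ 2 * u ^ 2 := by positivity
      have hy2 : (2 * u ^ 2) ^ 2 ≤ |y| ^ 2 := by
        apply pow_le_pow_left₀ habs hkey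
      rw [sq_abs] at hy2
      rw [hAdef]
      nlinarith [sq_nonneg (1 - u ^ 2)]
    have hjb : jb y ^ α = (1 + y ^ 2) ^ (α/2) := by
      rw [jb, Real.sqrt_eq_rpow, ← Real.rpow_mul (by positivity),
        show (1/2 : ℝ) * α = α/2 by ring]
    have h1 : (1 + y ^ 2) ^ (α/2) ≤ (A ^ 2 / 2) ^ (α/2) :=
      Real.rpow_le_rpow_of_nonpos (by positivity) hsq (by linarith)
    have h2 : (A ^ 2 / 2) ^ (α/2) = (1/2 : ℝ) ^ (α/2) * A ^ α := by
      have : A ^ 2 / 2 = A ^ 2 * (1/2 : ℝ) := by ring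
      rw [this, Real.mul_rpow (by positivity) (by norm_num),
        ← Real.rpow_natCast A 2, ← Real.rpow_mul (by linarith)]
      norm_num
      ring_nf
    have h3 : A ^ α ≤ (1 + ((k : ℝ) - ((m : ℝ)/2 + r)) ^ 2) ^ α
        + (1 + ((k : ℝ) - ((m : ℝ)/2 - r)) ^ 2) ^ α := by
      have e1 : (k : ℝ) - ((m : ℝ)/2 + r) = x - r := by rw [hxdef]; ring
      have e2 : (k : ℝ) - ((m : ℝ)/2 - r) = x + r := by rw [hxdef]; ring
      rw [e1, e2]
      rcases abs_cases x with ⟨hxx, _⟩ | ⟨hxx, _⟩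
      · have hA' : A = 1 + (x - r) ^ 2 := by rw [hAdef, hudef, hxx]
        rw [hA']
        have : (0:ℝ) ≤ (1 + (x + r) ^ 2) ^ α := by positivity
        linarith
      · have hA' : A = 1 + (x + r) ^ 2 := by rw [hAdef, hudef, hxx]; ring_nf
        rw [hA']
        have : (0:ℝ) ≤ (1 + (x - r) ^ 2) ^ α := by positivity
        linarith
    calc jb y ^ α = (1 + y ^ 2) ^ (α/2) := hjb
      _ ≤ (A ^ 2 / 2) ^ (α/2) := h1
      _ = (1/2 : ℝ) ^ (α/2) * A ^ α := h2
      _ ≤ _ := mul_le_mul_of_nonneg_left h3 hhalf.le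
  calc ∑ k ∈ Finset.range (m + 1),
        jb (τ - (k : ℝ) * ((k : ℝ) + 1) - ((m - k : ℕ) : ℝ) * (((m - k : ℕ) : ℝ) + 1)) ^ α
      ≤ ∑ k ∈ Finset.range (m + 1), (1/2 : ℝ) ^ (α/2) *
          ((1 + ((k : ℝ) - ((m : ℝ)/2 + r)) ^ 2) ^ α
            + (1 + ((k : ℝ) - ((m : ℝ)/2 - r)) ^ 2) ^ α) := Finset.sum_le_sum hpt
    _ = (1/2 : ℝ) ^ (α/2) * (∑ k ∈ Finset.range (m + 1),
          (1 + ((k : ℝ) - ((m : ℝ)/2 + r)) ^ 2) ^ α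
        + ∑ k ∈ Finset.range (m + 1), (1 + ((k : ℝ) - ((m : ℝ)/2 - r)) ^ 2) ^ α) := by
        rw [← Finset.sum_add_distrib, Finset.mul_sum]
    _ ≤ (1/2 : ℝ) ^ (α/2) * (T + T) := by
        have h1 := hT ((m : ℝ)/2 + r) (Finset.range (m + 1))
        have h2 := hT ((m : ℝ)/2 - r) (Finset.range (m + 1))
        exact mul_le_mul_of_nonneg_left (by linarith) hhalf.le
    _ ≤ (1/2 : ℝ) ^ (α/2) * (2 * T) + 1 := by
        have hTT : T + T = 2 * T := by ring
        rw [hTT]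
        linarith
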